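/- Let κ : ℝ → ℝ be continuous and bounded, and C > 0 a constant such that ∫₀^ρ κ(s) ds < 0 for all ρ ≥ C. Define e^{f(τ)} := ∫_τ^{τ+C} exp(∫_τ^ρ κ(s) ds) dρ. Then the function κ'(τ) := e^{f(τ)}(κ(τ) + f'(τ)) satisfies κ'(τ) = -1 + exp(∫_τ^{τ+C} κ(s) ds) < 0 for all τ. -/

import Mathlib

open intervalIntegral

/-- Rescaled surface gravity is negative: if `κ` is continuous and bounded and
`∫_τ^{τ+ρ} κ < 0` for all `ρ ≥ C`, then with `e^{f(τ)} = ∫_τ^{τ+C} exp(∫_τ^ρ κ) dρ`,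
the rescaled surface gravity `κ'(τ) = e^{f(τ)} (κ(τ) + f'(τ))` equals
`-1 + exp(∫_τ^{τ+C} κ) < 0`. -/
theorem rescaled_surface_gravity_negative
    (κ : ℝ → ℝ) (K C : ℝ) (hcont : Continuous κ) (hbd : ∀ s, |κ s| ≤ K)
    (hC : 0 < C)
    (hneg : ∀ τ : ℝ, ∀ ρ ≥ C, (∫ s in τ..(τ + ρ), κ s) < 0) :
    ∀ τ : ℝ,
      Real.exp ((fun σ => Real.log (∫ ρ in σ..(σ + C), Real.exp (∫ s in σ..ρ, κ s))) τ)
          * (κ τ +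
            deriv (fun σ => Real.log (∫ ρ in σ..(σ + C), Real.exp (∫ s in σ..ρ, κ s))) τ)
        = -1 + Real.exp (∫ s in τ..(τ + C), κ s) ∧
      -1 + Real.exp (∫ s in τ..(τ + C), κ s) < 0 := by
  intro τ
  set G : ℝ → ℝ := fun x => ∫ s in (0:ℝ)..x, κ s with hGdef
  have hGderiv : ∀ x, HasDerivAt G (κ x) x := fun x =>
    intervalIntegral.integral_hasDerivAt_right (hcont.intervalIntegrable 0 x)
      hcont.aestronglyMeasurable.stronglyMeasurableAtFilter hcont.continuousAt
  have hGcont : Continuous G := by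
    apply continuous_iff_continuousAt.2
    exact fun x => (hGderiv x).continuousAt
  have hsub : ∀ a b : ℝ, (∫ s in a..b, κ s) = G b - G a := fun a b => by
    rw [hGdef]
    exact (intervalIntegral.integral_interval_sub_left (hcont.intervalIntegrable 0 b)
      (hcont.intervalIntegrable 0 a)).symm
  have hEGcont : Continuous fun x => Real.exp (G x) := Real.continuous_exp.comp hGcont
  set H : ℝ → ℝ := fun x => ∫ ρ in (0:ℝ)..x, Real.exp (G ρ) with hHdef
  have hHderiv : ∀ x, HasDerivAt H (Real.exp (G x)) x := fun x =>
    intervalIntegral.integral_hasDerivAt_right (hEGcont.intervalIntegrable 0 x)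
      hEGcont.aestronglyMeasurable.stronglyMeasurableAtFilter hEGcont.continuousAt
  have hHsub : ∀ σ : ℝ, H (σ + C) - H σ = ∫ ρ in σ..(σ + C), Real.exp (G ρ) := fun σ =>
    intervalIntegral.integral_interval_sub_left (hEGcont.intervalIntegrable 0 (σ + C))
      (hEGcont.intervalIntegrable 0 σ)
  set F : ℝ → ℝ := fun σ => ∫ ρ in σ..(σ + C), Real.exp (∫ s in σ..ρ, κ s) with hFdef
  have hFeq : ∀ σ, F σ = Real.exp (-(G σ)) * (H (σ + C) - H σ) := by
    intro σ
    rw [hHsub σ, hFdef]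
    simp only
    rw [← intervalIntegral.integral_const_mul]
    apply intervalIntegral.integral_congr
    intro ρ _
    show Real.exp (∫ s in σ..ρ, κ s) = Real.exp (-(G σ)) * Real.exp (G ρ)
    rw [hsub σ ρ, ← Real.exp_add]
    ring_nf
  have hDpos : ∀ σ, 0 < H (σ + C) - H σ := by
    intro σ
    rw [hHsub σ]
    exact intervalIntegral.intervalIntegral_pos_of_pos
      (hEGcont.intervalIntegrable σ (σ + C)) (fun x => Real.exp_pos _) (by linarith)
  have hFpos : ∀ σ, 0 < F σ := fun σ => by
    rw [hFeq σ]; exact mul_pos (Real.exp_pos _) (hDpos σ)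
  -- derivative of F
  have hFderiv : HasDerivAt F
      (-(κ τ) * Real.exp (-(G τ)) * (H (τ + C) - H τ)
        + Real.exp (-(G τ)) * (Real.exp (G (τ + C)) - Real.exp (G τ))) τ := by
    have h1 : HasDerivAt (fun σ => Real.exp (-(G σ))) (-(κ τ) * Real.exp (-(G τ))) τ := by
      have := ((hGderiv τ).neg).exp
      simpa [mul_comm] using this
    have h2 : HasDerivAt (fun σ => H (σ + C) - H σ)
        (Real.exp (G (τ + C)) - Real.exp (G τ)) τ := by
      have hc : HasDerivAt (fun σ : ℝ => H (σ + C)) (Real.exp (G (τ + C))) τ := by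
        have := (hHderiv (τ + C)).comp τ ((hasDerivAt_id τ).add_const C)
        rw [mul_one] at this; exact this
      exact hc.sub (hHderiv τ)
    have := h1.mul h2
    have heq : F = fun σ => Real.exp (-(G σ)) * (H (σ + C) - H σ) := funext hFeq
    rw [heq]
    exact this
  set F' : ℝ := -(κ τ) * Real.exp (-(G τ)) * (H (τ + C) - H τ)
        + Real.exp (-(G τ)) * (Real.exp (G (τ + C)) - Real.exp (G τ)) with hF'def
  have hlogderiv : deriv (fun σ => Real.log (F σ)) τ = F' / F τ :=
    (hFderiv.log (ne_of_gt (hFpos τ))).deriv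
  have hmain : Real.exp (Real.log (F τ)) * (κ τ + deriv (fun σ => Real.log (F σ)) τ)
      = -1 + Real.exp (∫ s in τ..(τ + C), κ s) := by
    rw [hlogderiv, Real.exp_log (hFpos τ)]
    rw [mul_add, mul_div_cancel₀ _ (ne_of_gt (hFpos τ)), hFeq τ, hF'def]
    rw [hsub τ (τ + C), Real.exp_sub]
    have e1 : Real.exp (-(G τ)) * Real.exp (G τ) = 1 := by
      rw [← Real.exp_add]; simp
    have e3 : Real.exp (-(G τ)) * Real.exp (G (τ + C))
        = Real.exp (G (τ + C)) / Real.exp (G τ) := by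
      rw [Real.exp_neg]; ring
    linear_combination e3 - e1
  have hneg' : -1 + Real.exp (∫ s in τ..(τ + C), κ s) < 0 := by
    have := hneg τ C le_rfl
    have := Real.exp_lt_one_iff.2 this
    linarith
  exact ⟨hmain, hneg'⟩
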